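/- Let 0 < s < 1, 1 < p < ∞ with sp > n, and Ω ⊂ ℝ^n open and bounded. There is C = C(n,p,s) such that for every u ∈ W^{s,p}(ℝ^n) vanishing a.e. outside Ω: ‖u‖_{L^∞(Ω)}^p ≤ C·|Ω|^(sp/n - 1)·[u]_{W^{s,p}(ℝ^n)}^p. -/

import Mathlib

open Real MeasureTheory Metric


/-- De Giorgi iteration lemma. -/
lemma degiorgi_iter (p β K A : ℝ) (hp : 0 < p) (hβ : 1 < β) (hK : 0 ≤ K) (hA : 0 ≤ A)
    (ψ : ℝ → ℝ) (hnn : ∀ t, 0 ≤ ψ t)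
    (hmono : ∀ a b : ℝ, 0 ≤ a → a ≤ b → ψ b ≤ ψ a) (hψ0 : ψ 0 ≤ A)
    (hrec : ∀ μ lam : ℝ, 0 ≤ μ → μ < lam → ψ lam ≤ K * (lam - μ) ^ (-p) * ψ μ ^ β) :
    ∀ lam : ℝ, (K * A ^ (β - 1) * 2 ^ (p * β / (β - 1))) ^ (1 / p) < lam → ψ lam = 0 := by
  intro lam hlam
  have hp' : p ≠ 0 := ne_of_gt hp
  by_cases hA0 : A = 0
  · have hψ00 : ψ 0 = 0 := le_antisymm (hψ0.trans_eq hA0) (hnn 0)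
    have hlam0 : 0 < lam := by
      refine lt_of_le_of_lt ?_ hlam
      positivity
    have := hrec 0 lam le_rfl hlam0
    rw [hψ00, Real.zero_rpow (by linarith : β ≠ 0)] at this
    simp only [mul_zero] at this
    exact le_antisymm (by simpa using this) (hnn lam)
  by_cases hK0 : K = 0
  · have hlam0 : 0 < lam := by
      refine lt_of_le_of_lt ?_ hlam
      positivity
    have := hrec 0 lam le_rfl hlam0
    rw [hK0] at this
    simp only [zero_mul] at this
    exact le_antisymm this (hnn lam)
  have hKpos : 0 < K := lt_of_le_of_ne hK (Ne.symm hK0)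
  have hApos : 0 < A := lt_of_le_of_ne hA (Ne.symm hA0)
  have hβ1 : 0 < β - 1 := by linarith
  set γ : ℝ := p / (β - 1) with hγdef
  have hγ : 0 < γ := div_pos hp hβ1
  have hγp : γ * (β - 1) = p := by
    rw [hγdef]; field_simp
  have hgb : p * β / (β - 1) = γ * β := by
    rw [hγdef]; ring
  set X : ℝ := K * A ^ (β - 1) * 2 ^ (γ * β) with hXdef
  have hu : (0:ℝ) < A ^ (β - 1) := Real.rpow_pos_of_pos hApos _
  have hv : (0:ℝ) < (2:ℝ) ^ (γ * β) := Real.rpow_pos_of_pos two_pos _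
  have hXpos : 0 < X := by positivity
  rw [hgb] at hlam
  set d : ℝ := X ^ (1 / p) with hddef
  have hdpos : 0 < d := Real.rpow_pos_of_pos hXpos _
  have hdp : d ^ p = X := by
    rw [hddef, one_div, Real.rpow_inv_rpow hXpos.le hp']
  -- the iteration
  have key : ∀ k : ℕ, ψ (d * (1 - 2 ^ (-(k:ℝ)))) ≤ A * 2 ^ (-(k:ℝ) * γ) := by
    intro k
    induction k with
    | zero => simpa using hψ0
    | succ k ih =>
      have h2k : (0:ℝ) < 2 ^ (-(k:ℝ)) := Real.rpow_pos_of_pos two_pos _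
      have h2k1 : (0:ℝ) < 2 ^ (-((k:ℝ)+1)) := Real.rpow_pos_of_pos two_pos _
      have hle1 : (2:ℝ) ^ (-(k:ℝ)) ≤ 1 := by
        rw [show (1:ℝ) = 2 ^ (0:ℝ) by simp]
        exact Real.rpow_le_rpow_of_exponent_le one_le_two
          (neg_nonpos.mpr (Nat.cast_nonneg k))
      have hlt : (2:ℝ) ^ (-((k:ℝ)+1)) < 2 ^ (-(k:ℝ)) :=
        Real.rpow_lt_rpow_of_exponent_lt one_lt_two (by linarith)
      set μ := d * (1 - 2 ^ (-(k:ℝ))) with hμdef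
      set lam' := d * (1 - 2 ^ (-((k:ℝ)+1))) with hlamdef
      have hμ0 : 0 ≤ μ := by
        apply mul_nonneg hdpos.le; linarith
      have hμlam : μ < lam' := by
        apply mul_lt_mul_of_pos_left _ hdpos; linarith
      have hdiff : lam' - μ = d * 2 ^ (-((k:ℝ)+1)) := by
        rw [hlamdef, hμdef]
        have hsplit : (2:ℝ) ^ (-(k:ℝ)) = 2 * 2 ^ (-((k:ℝ)+1)) := by
          rw [show (2:ℝ) * 2 ^ (-((k:ℝ)+1)) = 2 ^ ((1:ℝ) + -((k:ℝ)+1)) from by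
            rw [Real.rpow_add two_pos, Real.rpow_one]]
          norm_num
        rw [hsplit]; ring
      have step := hrec μ lam' hμ0 hμlam
      rw [hdiff] at step
      have hψμβ : ψ μ ^ β ≤ (A * 2 ^ (-(k:ℝ) * γ)) ^ β :=
        Real.rpow_le_rpow (hnn μ) ih (by linarith)
      have step2 : ψ lam' ≤ K * (d * 2 ^ (-((k:ℝ)+1))) ^ (-p) * (A * 2 ^ (-(k:ℝ) * γ)) ^ β := by
        refine step.trans ?_
        apply mul_le_mul_of_nonneg_left hψμβ
        have h3 : (0:ℝ) < (d * 2 ^ (-((k:ℝ)+1))) ^ (-p) := Real.rpow_pos_of_pos (by positivity) _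
        positivity
      -- the RHS equals A * 2 ^ (-((k:ℝ)+1) * γ) exactly
      have hA2 : A ^ β = A ^ (β - 1) * A := by
        rw [← Real.rpow_add_one hApos.ne' (β-1)]
        congr 1; ring
      have h2pows : (2:ℝ) ^ (-((k:ℝ)+1) * -p) * 2 ^ (-(k:ℝ) * γ * β)
          = 2 ^ (γ * β) * 2 ^ (-((k:ℝ)+1) * γ) := by
        rw [← Real.rpow_add two_pos, ← Real.rpow_add two_pos]
        congr 1
        nlinarith [hγp]
      have hcalc : K * (d * 2 ^ (-((k:ℝ)+1))) ^ (-p) * (A * 2 ^ (-(k:ℝ) * γ)) ^ β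
          = A * 2 ^ (-((k:ℝ)+1) * γ) := by
        rw [Real.mul_rpow hdpos.le h2k1.le, Real.mul_rpow hApos.le (Real.rpow_pos_of_pos two_pos (-(k:ℝ) * γ)).le,
          Real.rpow_neg hdpos.le p, hdp,
          ← Real.rpow_mul (by norm_num : (0:ℝ) ≤ 2) (-((k:ℝ)+1)) (-p),
          ← Real.rpow_mul (by norm_num : (0:ℝ) ≤ 2) (-(k:ℝ) * γ) β,
          hA2, hXdef]
        have h1 : (0:ℝ) < 2 ^ (-((k:ℝ)+1) * -p) := Real.rpow_pos_of_pos two_pos _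
        have h2 : (0:ℝ) < 2 ^ (-(k:ℝ) * γ * β) := Real.rpow_pos_of_pos two_pos _
        have h3 : (0:ℝ) < 2 ^ (-((k:ℝ)+1) * γ) := Real.rpow_pos_of_pos two_pos _
        set w1 := (2:ℝ) ^ (-((k:ℝ)+1) * -p) with hw1
        set w2 := (2:ℝ) ^ (-(k:ℝ) * γ * β) with hw2
        set z := (2:ℝ) ^ (-((k:ℝ)+1) * γ) with hz
        set v := (2:ℝ) ^ (γ * β) with hvv
        set u := A ^ (β - 1) with huu
        field_simp
        linear_combination h2pows
      push_cast
      calc ψ (d * (1 - 2 ^ (-((k:ℝ)+1)))) ≤ _ := step2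
      _ = A * 2 ^ (-((k:ℝ)+1) * γ) := hcalc
  -- pass to the limit
  have hlim : Filter.Tendsto (fun k : ℕ => A * 2 ^ (-(k:ℝ) * γ)) Filter.atTop (nhds 0) := by
    have h1 : ∀ k : ℕ, A * 2 ^ (-(k:ℝ) * γ) = A * ((2:ℝ) ^ (-γ)) ^ k := by
      intro k
      rw [← Real.rpow_natCast ((2:ℝ) ^ (-γ)) k,
        ← Real.rpow_mul (by norm_num : (0:ℝ) ≤ 2)]
      congr 1; ring
    simp only [h1]
    rw [show (0:ℝ) = A * 0 by ring]
    apply Filter.Tendsto.const_mul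
    apply tendsto_pow_atTop_nhds_zero_of_lt_one
    · positivity
    · rw [show (1:ℝ) = 2 ^ (0:ℝ) by simp]
      exact Real.rpow_lt_rpow_of_exponent_lt one_lt_two (by linarith)
  have hbd : ∀ k : ℕ, ψ lam ≤ A * 2 ^ (-(k:ℝ) * γ) := by
    intro k
    refine le_trans (hmono (d * (1 - 2 ^ (-(k:ℝ)))) lam ?_ ?_) (key k)
    · have h2k : (2:ℝ) ^ (-(k:ℝ)) ≤ 1 := by
        rw [show (1:ℝ) = 2 ^ (0:ℝ) by simp]
        exact Real.rpow_le_rpow_of_exponent_le one_le_two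
          (neg_nonpos.mpr (Nat.cast_nonneg k))
      apply mul_nonneg hdpos.le; linarith
    · have h2k : (0:ℝ) < 2 ^ (-(k:ℝ)) := Real.rpow_pos_of_pos two_pos _
      have : d * (1 - 2 ^ (-(k:ℝ))) ≤ d := mul_le_of_le_one_right hdpos.le (by linarith)
      linarith
  exact le_antisymm (ge_of_tendsto' hlim hbd) (hnn lam)


lemma kernel_lb (n : ℕ) (hn : 0 < n) (a : ℝ) (ha : 0 < a) :
    ∃ c₁ : ℝ, 0 < c₁ ∧ ∀ V : ℝ, 0 < V → ∀ (x : EuclideanSpace ℝ (Fin n))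
      (Es : Set (EuclideanSpace ℝ (Fin n))), MeasurableSet Es →
      volume Es ≤ ENNReal.ofReal V →
      ENNReal.ofReal (c₁ * V ^ (1 - a / n)) ≤
        ∫⁻ y in Esᶜ, ENNReal.ofReal (1 / ‖x - y‖ ^ a) := by
  set ω : ℝ := (volume (ball (0 : EuclideanSpace ℝ (Fin n)) 1)).toReal with hωdef
  have hωfin : volume (ball (0 : EuclideanSpace ℝ (Fin n)) 1) ≠ ⊤ :=
    (measure_ball_lt_top).ne
  have hω : 0 < ω := ENNReal.toReal_pos (measure_ball_pos volume _ one_pos).ne' hωfin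
  have h2n : (1:ℝ) < 2 ^ n := one_lt_pow₀ (by norm_num) hn.ne'
  set c2 : ℝ := ((2:ℝ) ^ n - 1) * ω / 2 with hc2def
  have hc2 : 0 < c2 := by
    apply div_pos (mul_pos (by linarith) hω) two_pos
  refine ⟨2 ^ (-a) * c2 ^ (a / n), by positivity, ?_⟩
  intro V hV x Es hEsm hEs
  set T : ℝ := V / c2 with hTdef
  have hT : 0 < T := div_pos hV hc2
  set R : ℝ := T ^ (1 / (n:ℝ)) with hRdef
  have hR : 0 < R := Real.rpow_pos_of_pos hT _
  have hn' : (n:ℝ) ≠ 0 := Nat.cast_ne_zero.mpr hn.ne'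
  have hRn : R ^ n = T := by
    rw [hRdef, ← Real.rpow_natCast (T ^ (1 / (n:ℝ))) n, ← Real.rpow_mul hT.le,
      one_div_mul_cancel hn', Real.rpow_one]
  set S : Set (EuclideanSpace ℝ (Fin n)) := ball x (2 * R) \ ball x R with hSdef
  -- volume of the annulus
  have hSol : volume S = ENNReal.ofReal (2 * V) := by
    rw [hSdef, measure_diff (ball_subset_ball (by linarith)) measurableSet_ball.nullMeasurableSet
      measure_ball_lt_top.ne]
    rw [Measure.addHaar_ball_of_pos volume x (by linarith : (0:ℝ) < 2 * R),
      Measure.addHaar_ball_of_pos volume x hR, finrank_euclideanSpace_fin,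
      show volume (ball (0 : EuclideanSpace ℝ (Fin n)) 1) = ENNReal.ofReal ω from
        (ENNReal.ofReal_toReal hωfin).symm]
    rw [← ENNReal.ofReal_mul (by positivity), ← ENNReal.ofReal_mul (by positivity),
      ← ENNReal.ofReal_sub _ (by positivity)]
    congr 1
    have : ((2:ℝ) * R) ^ n = 2 ^ n * R ^ n := by rw [mul_pow]
    rw [this, hRn]
    rw [hTdef, hc2def]
    have h2n1 : (2:ℝ) ^ n - 1 ≠ 0 := by linarith
    field_simp
  -- the set S \ Es has measure at least V
  have hSdiff : ENNReal.ofReal V ≤ volume (S \ Es) := by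
    refine le_trans ?_ (le_measure_diff (μ := volume) (s₁ := S) (s₂ := Es))
    rw [hSol]
    rw [show (2:ℝ) * V = V + V by ring, ENNReal.ofReal_add hV.le hV.le]
    calc ENNReal.ofReal V = ENNReal.ofReal V + ENNReal.ofReal V - ENNReal.ofReal V := by
          rw [ENNReal.add_sub_cancel_right ENNReal.ofReal_ne_top]
    _ ≤ ENNReal.ofReal V + ENNReal.ofReal V - volume Es := by
          exact tsub_le_tsub_left hEs _
  -- pointwise lower bound on the annulus
  have hpt : ∀ y ∈ S \ Es, ENNReal.ofReal (1 / (2 * R) ^ a) ≤ ENNReal.ofReal (1 / ‖x - y‖ ^ a) := by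
    intro y hy
    have hyS : y ∈ S := hy.1
    have hy1 : dist y x < 2 * R := mem_ball.mp hyS.1
    have hy2 : R ≤ dist y x := by
      have := hyS.2
      rw [mem_ball] at this
      linarith [not_lt.mp this]
    have hxy : ‖x - y‖ = dist y x := by rw [dist_eq_norm, norm_sub_rev]
    apply ENNReal.ofReal_le_ofReal
    apply one_div_le_one_div_of_le
    · exact Real.rpow_pos_of_pos (by rw [hxy]; linarith) a
    · exact Real.rpow_le_rpow (by rw [hxy]; linarith) (by rw [hxy]; linarith) ha.le
  have hmeas : MeasurableSet (S \ Es) := (measurableSet_ball.diff measurableSet_ball).diff hEsm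
  calc ENNReal.ofReal (2 ^ (-a) * c2 ^ (a / n) * V ^ (1 - a / n))
      = ENNReal.ofReal (1 / (2 * R) ^ a) * ENNReal.ofReal V := by
        rw [← ENNReal.ofReal_mul (by positivity)]
        congr 1
        -- key algebraic identity
        have hRa : R ^ a = (V / c2) ^ (a / (n:ℝ)) := by
          rw [hRdef, ← Real.rpow_mul hT.le]
          rw [hTdef]
          congr 1
          field_simp
        have h2Ra : (0:ℝ) < (2 * R) ^ a := Real.rpow_pos_of_pos (by linarith) a
        have hVexp : V ^ (a / (n:ℝ)) * V ^ (1 - a / (n:ℝ)) = V := by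
          rw [← Real.rpow_add hV]
          norm_num
        have hsplit : (2 * R) ^ a = 2 ^ a * (V ^ (a / (n:ℝ)) * (c2 ^ (a / (n:ℝ)))⁻¹) := by
          rw [Real.mul_rpow two_pos.le hR.le, hRa,
            Real.div_rpow hV.le hc2.le, div_eq_mul_inv]
        have h2a : (0:ℝ) < (2:ℝ) ^ a := Real.rpow_pos_of_pos two_pos a
        have hc2a : (0:ℝ) < c2 ^ (a / (n:ℝ)) := Real.rpow_pos_of_pos hc2 _
        have hVa : (0:ℝ) < V ^ (a / (n:ℝ)) := Real.rpow_pos_of_pos hV _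
        have hmain : (2 ^ (-a) * c2 ^ (a / (n:ℝ)) * V ^ (1 - a / (n:ℝ))) * (2 * R) ^ a = V := by
          rw [hsplit, Real.rpow_neg two_pos.le]
          have e1 : ((2:ℝ) ^ a)⁻¹ * (2:ℝ) ^ a = 1 := inv_mul_cancel₀ h2a.ne'
          have e2 : c2 ^ (a / (n:ℝ)) * (c2 ^ (a / (n:ℝ)))⁻¹ = 1 := mul_inv_cancel₀ hc2a.ne'
          linear_combination (c2 ^ (a / (n:ℝ)) * (c2 ^ (a / (n:ℝ)))⁻¹ * V ^ (a / (n:ℝ))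
            * V ^ (1 - a / (n:ℝ))) * e1 + (V ^ (a / (n:ℝ)) * V ^ (1 - a / (n:ℝ))) * e2 + hVexp
        rw [one_div, eq_comm, inv_mul_eq_iff_eq_mul₀ h2Ra.ne', eq_comm, mul_comm ((2 * R) ^ a)]
        exact hmain
  _ ≤ ENNReal.ofReal (1 / (2 * R) ^ a) * volume (S \ Es) := by
        exact mul_le_mul_right hSdiff _
  _ = ∫⁻ _ in S \ Es, ENNReal.ofReal (1 / (2 * R) ^ a) := by
        rw [setLIntegral_const]
  _ ≤ ∫⁻ y in S \ Es, ENNReal.ofReal (1 / ‖x - y‖ ^ a) := setLIntegral_mono' hmeas hpt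
  _ ≤ ∫⁻ y in Esᶜ, ENNReal.ofReal (1 / ‖x - y‖ ^ a) := by
        apply lintegral_mono_set
        intro y hy
        exact hy.2

/-- The `p`-th power of the Gagliardo (Sobolev–Slobodeckiĭ) seminorm
`[u]_{W^{s,p}(ℝ^n)}^p`. -/
noncomputable def gagliardoP (n : ℕ) (s p : ℝ) (u : EuclideanSpace ℝ (Fin n) → ℝ) : ℝ :=
  ∫ q : EuclideanSpace ℝ (Fin n) × EuclideanSpace ℝ (Fin n),
    |u q.1 - u q.2| ^ p / ‖q.1 - q.2‖ ^ ((n : ℝ) + s * p)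

theorem stmt16 (n : ℕ) (hn : 0 < n) (s p : ℝ) (hs0 : 0 < s) (hs1 : s < 1) (hp : 1 < p)
    (hsp : (n : ℝ) < s * p) :
    ∃ C : ℝ, 0 < C ∧
      ∀ (Ω : Set (EuclideanSpace ℝ (Fin n))) (u : EuclideanSpace ℝ (Fin n) → ℝ),
        IsOpen Ω → Bornology.IsBounded Ω →
        Measurable u →
        (∀ᵐ x, x ∉ Ω → u x = 0) →
        Integrable (fun x => |u x| ^ p) →
        Integrable (fun q : EuclideanSpace ℝ (Fin n) × EuclideanSpace ℝ (Fin n) =>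
          |u q.1 - u q.2| ^ p / ‖q.1 - q.2‖ ^ ((n : ℝ) + s * p)) →
        (eLpNormEssSup u (volume.restrict Ω)).toReal ^ p
          ≤ C * (volume Ω).toReal ^ (s * p / n - 1) * gagliardoP n s p u := by
  have hnR : (0:ℝ) < n := Nat.cast_pos.mpr hn
  have hp0 : (0:ℝ) < p := by linarith
  set a : ℝ := (n:ℝ) + s * p with hadef
  have ha : 0 < a := by positivity
  obtain ⟨c₁, hc₁, hker⟩ := kernel_lb n hn a ha
  set β : ℝ := s * p / n with hβdef
  have hβ : 1 < β := (one_lt_div hnR).mpr hsp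
  refine ⟨2 ^ (p * β / (β - 1)) / c₁, by positivity, ?_⟩
  intro Ω u hΩo hΩb hu hvan hInt1 hInt2
  set F : EuclideanSpace ℝ (Fin n) × EuclideanSpace ℝ (Fin n) → ℝ := fun q => |u q.1 - u q.2| ^ p / ‖q.1 - q.2‖ ^ a with hFdef
  have hFnn : ∀ q, 0 ≤ F q := by
    intro q
    apply div_nonneg (Real.rpow_nonneg (abs_nonneg _) _) (Real.rpow_nonneg (norm_nonneg _) _)
  have hFmeas : Measurable F := by
    apply Measurable.div
    · exact Measurable.pow (((hu.comp measurable_fst).sub (hu.comp measurable_snd)).abs)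
        measurable_const
    · exact Measurable.pow ((measurable_fst.sub measurable_snd).norm) measurable_const
  set G : ENNReal := ∫⁻ q, ENNReal.ofReal (F q) with hGdef
  have hGfin : G ≠ ⊤ := by
    have h1 := hInt2.hasFiniteIntegral
    rw [hasFiniteIntegral_iff_ofReal (Filter.Eventually.of_forall hFnn)] at h1
    exact h1.ne
  have hGeq : gagliardoP n s p u = G.toReal := by
    rw [gagliardoP, hGdef]
    exact integral_eq_lintegral_of_nonneg_ae (Filter.Eventually.of_forall hFnn)
      hFmeas.aestronglyMeasurable
  have hΩfin : volume Ω ≠ ⊤ := hΩb.measure_lt_top.ne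
  set ψ : ℝ → ℝ := fun t => (volume {x : EuclideanSpace ℝ (Fin n) | t < |u x|}).toReal with hψdef
  have hAmeas : ∀ t : ℝ, MeasurableSet {x : EuclideanSpace ℝ (Fin n) | t < |u x|} := fun t =>
    measurableSet_lt measurable_const hu.abs
  have hsub : ∀ t : ℝ, 0 ≤ t → volume {x : EuclideanSpace ℝ (Fin n) | t < |u x|} ≤ volume Ω := by
    intro t ht
    apply measure_mono_ae
    filter_upwards [hvan] with x hx hxt
    have hxt' : t < |u x| := hxt
    by_contra h
    rw [hx h, abs_zero] at hxt'
    linarith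
  have hfin : ∀ t : ℝ, 0 ≤ t → volume {x : EuclideanSpace ℝ (Fin n) | t < |u x|} ≠ ⊤ := fun t ht =>
    ((hsub t ht).trans_lt (lt_top_iff_ne_top.mpr hΩfin)).ne
  set K : ℝ := G.toReal / c₁ with hKdef
  have hK : 0 ≤ K := div_nonneg ENNReal.toReal_nonneg hc₁.le
  set A : ℝ := (volume Ω).toReal with hAdef
  have hA : 0 ≤ A := ENNReal.toReal_nonneg
  -- recurrence
  have hrec : ∀ μ lam : ℝ, 0 ≤ μ → μ < lam → ψ lam ≤ K * (lam - μ) ^ (-p) * ψ μ ^ β := by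
    intro μ lam hμ0 hμlam
    have hlam0 : 0 < lam := lt_of_le_of_lt hμ0 hμlam
    by_cases hzero : volume {x : EuclideanSpace ℝ (Fin n) | μ < |u x|} = 0
    · have hψlam : ψ lam = 0 := by
        rw [hψdef]
        simp only
        rw [ENNReal.toReal_eq_zero_iff]
        left
        refine measure_mono_null ?_ hzero
        intro x hx
        exact lt_trans hμlam hx
      rw [hψlam]
      have e1 : (0:ℝ) ≤ (lam - μ) ^ (-p) := Real.rpow_nonneg (by linarith) _
      have e2 : (0:ℝ) ≤ ψ μ ^ β := Real.rpow_nonneg ENNReal.toReal_nonneg _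
      positivity
    · set V : ℝ := ψ μ with hVdef
      have hVfin : volume {x : EuclideanSpace ℝ (Fin n) | μ < |u x|} ≠ ⊤ := hfin μ hμ0
      have hV : 0 < V := ENNReal.toReal_pos hzero hVfin
      have hAle : volume {x : EuclideanSpace ℝ (Fin n) | μ < |u x|} ≤ ENNReal.ofReal V := by
        rw [hψdef] at hVdef
        rw [hVdef, ENNReal.ofReal_toReal hVfin]
      have hlmp : (0:ℝ) < (lam - μ) ^ p := Real.rpow_pos_of_pos (by linarith) _
      set c' : ℝ := (lam - μ) ^ p * (c₁ * V ^ (1 - a / n)) with hc'def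
      have hc'pos : 0 < c' := by
        have := Real.rpow_pos_of_pos hV (1 - a / n)
        positivity
      have key : ENNReal.ofReal c' * volume {x : EuclideanSpace ℝ (Fin n) | lam < |u x|} ≤ G := by
        calc ENNReal.ofReal c' * volume {x : EuclideanSpace ℝ (Fin n) | lam < |u x|}
            = ∫⁻ _ in {x : EuclideanSpace ℝ (Fin n) | lam < |u x|}, ENNReal.ofReal c' := (setLIntegral_const _ _).symm
        _ ≤ ∫⁻ x in {x : EuclideanSpace ℝ (Fin n) | lam < |u x|}, ∫⁻ y in {x : EuclideanSpace ℝ (Fin n) | μ < |u x|}ᶜ,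
              ENNReal.ofReal (F (x, y)) := by
            apply setLIntegral_mono' (hAmeas lam)
            intro x hx
            rw [hc'def, ENNReal.ofReal_mul hlmp.le]
            calc ENNReal.ofReal ((lam - μ) ^ p) * ENNReal.ofReal (c₁ * V ^ (1 - a / n))
                ≤ ENNReal.ofReal ((lam - μ) ^ p) *
                    ∫⁻ y in {x : EuclideanSpace ℝ (Fin n) | μ < |u x|}ᶜ, ENNReal.ofReal (1 / ‖x - y‖ ^ a) :=
                  mul_le_mul_right (hker V hV x _ (hAmeas μ) hAle) _
            _ = ∫⁻ y in {x : EuclideanSpace ℝ (Fin n) | μ < |u x|}ᶜ,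
                  ENNReal.ofReal ((lam - μ) ^ p) * ENNReal.ofReal (1 / ‖x - y‖ ^ a) :=
                  (lintegral_const_mul' _ _ ENNReal.ofReal_ne_top).symm
            _ ≤ ∫⁻ y in {x : EuclideanSpace ℝ (Fin n) | μ < |u x|}ᶜ, ENNReal.ofReal (F (x, y)) := by
                  apply setLIntegral_mono' (hAmeas μ).compl
                  intro y hy
                  rw [← ENNReal.ofReal_mul hlmp.le]
                  apply ENNReal.ofReal_le_ofReal
                  have hx' : lam < |u x| := hx
                  have hy' : |u y| ≤ μ := not_lt.mp hy
                  have hxyne : x ≠ y := by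
                    intro h
                    rw [h] at hx'
                    linarith
                  have hnormpos : (0:ℝ) < ‖x - y‖ ^ a :=
                    Real.rpow_pos_of_pos (norm_pos_iff.mpr (sub_ne_zero.mpr hxyne)) _
                  have hdb : lam - μ ≤ |u x - u y| :=
                    le_trans (by linarith) (abs_sub_abs_le_abs_sub (u x) (u y))
                  rw [mul_one_div, hFdef]
                  exact (div_le_div_iff_of_pos_right hnormpos).mpr
                    (Real.rpow_le_rpow (by linarith) hdb hp0.le)
        _ ≤ ∫⁻ x in {x : EuclideanSpace ℝ (Fin n) | lam < |u x|}, ∫⁻ y,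
              ENNReal.ofReal (F (x, y)) := by
            apply lintegral_mono
            intro x
            exact setLIntegral_le_lintegral _ _
        _ ≤ ∫⁻ x, ∫⁻ y, ENNReal.ofReal (F (x, y)) := setLIntegral_le_lintegral _ _
        _ = G := by
            rw [hGdef, Measure.volume_eq_prod,
              lintegral_prod _ hFmeas.ennreal_ofReal.aemeasurable]
      -- extract the real inequality
      have hstep : ψ lam ≤ G.toReal / c' := by
        have h1 : volume {x : EuclideanSpace ℝ (Fin n) | lam < |u x|} ≤ G / ENNReal.ofReal c' := by
          rw [ENNReal.le_div_iff_mul_le (Or.inl ((ENNReal.ofReal_pos.mpr hc'pos).ne'))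
            (Or.inl ENNReal.ofReal_ne_top)]
          rw [mul_comm]
          exact key
        have h2 : G / ENNReal.ofReal c' ≠ ⊤ :=
          (ENNReal.div_lt_top hGfin ((ENNReal.ofReal_pos.mpr hc'pos).ne')).ne
        calc ψ lam ≤ (G / ENNReal.ofReal c').toReal := ENNReal.toReal_mono h2 h1
        _ = G.toReal / c' := by rw [ENNReal.toReal_div, ENNReal.toReal_ofReal hc'pos.le]
      refine hstep.trans (le_of_eq ?_)
      rw [hc'def, hKdef]
      have e1 : V ^ (1 - a / (n:ℝ)) = (V ^ β)⁻¹ := by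
        rw [← Real.rpow_neg hV.le]
        congr 1
        rw [hadef, hβdef]
        field_simp
        ring
      have e2 : (lam - μ) ^ (-p) = ((lam - μ) ^ p)⁻¹ := Real.rpow_neg (by linarith) p
      rw [e1, e2]
      ring_nf
      rw [inv_inv]
      ring
  -- apply De Giorgi
  have hmono : ∀ a b : ℝ, 0 ≤ a → a ≤ b → ψ b ≤ ψ a := by
    intro t1 t2 ht1 ht12
    apply ENNReal.toReal_mono (hfin t1 ht1)
    apply measure_mono
    intro x hx
    exact lt_of_le_of_lt ht12 hx
  have hψ0 : ψ 0 ≤ A := ENNReal.toReal_mono hΩfin (hsub 0 le_rfl)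
  have hnn : ∀ t, 0 ≤ ψ t := fun t => ENNReal.toReal_nonneg
  have hiter := degiorgi_iter p β K A hp0 hβ hK hA ψ hnn hmono hψ0 hrec
  set d : ℝ := (K * A ^ (β - 1) * 2 ^ (p * β / (β - 1))) ^ (1 / p) with hddef
  have hdnn : 0 ≤ d := Real.rpow_nonneg (by positivity) _
  -- essential sup bound
  set M : ℝ := (eLpNormEssSup u (volume.restrict Ω)).toReal with hMdef
  have hMle : M ≤ d := by
    by_contra hcon
    push_neg at hcon
    obtain ⟨lam, hlam1, hlam2⟩ := exists_between hcon
    have hψ0' : ψ lam = 0 := hiter lam hlam1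
    have hvol : volume {x : EuclideanSpace ℝ (Fin n) | lam < |u x|} = 0 := by
      have := hfin lam (hdnn.trans hlam1.le)
      rw [hψdef] at hψ0'
      simp only at hψ0'
      rcases ENNReal.toReal_eq_zero_iff _ |>.mp hψ0' with h | h
      · exact h
      · exact absurd h this
    have hae : ∀ᵐ x : EuclideanSpace ℝ (Fin n), ‖u x‖ ≤ lam := by
      rw [ae_iff]
      refine measure_mono_null ?_ hvol
      intro x hx
      simp only [Set.mem_setOf_eq, not_le, Real.norm_eq_abs] at hx ⊢
      exact hx
    have h1 : eLpNormEssSup u (volume : Measure (EuclideanSpace ℝ (Fin n))) ≤ ENNReal.ofReal lam :=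
      eLpNormEssSup_le_of_ae_bound hae
    have h2 : eLpNormEssSup u (volume.restrict Ω) ≤ eLpNormEssSup u (volume : Measure (EuclideanSpace ℝ (Fin n))) :=
      eLpNormEssSup_mono_measure u (Measure.absolutelyContinuous_of_le Measure.restrict_le_self)
    have h3 : M ≤ lam := by
      rw [hMdef]
      exact ENNReal.toReal_le_of_le_ofReal (hdnn.trans hlam1.le) (h2.trans h1)
    linarith
  have hMnn : 0 ≤ M := ENNReal.toReal_nonneg
  have hMp : M ^ p ≤ d ^ p := Real.rpow_le_rpow hMnn hMle hp0.le
  have hdp : d ^ p = K * A ^ (β - 1) * 2 ^ (p * β / (β - 1)) := by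
    rw [hddef, one_div, Real.rpow_inv_rpow (by positivity) hp0.ne']
  calc M ^ p ≤ d ^ p := hMp
  _ = 2 ^ (p * β / (β - 1)) / c₁ * A ^ (s * p / (n:ℝ) - 1) * gagliardoP n s p u := by
      rw [hdp, hGeq, hKdef]
      have : β - 1 = s * p / (n:ℝ) - 1 := by rw [hβdef]
      rw [← this]
      ring
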